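/- arXiv:1301.7119 — 3 statements merged into one kernel-verified Lean document; each statement's English description precedes it below -/
import Mathlib

section
/- Let M be the modified-label transformation on bit strings. For any two nonempty bit strings x and y with x ≠ y, there exists an index λ with 1 ≤ λ < min(length of M(x), length of M(y)) (0-indexed; i.e., λ is strictly after the first position and within both strings) such that the λ-th bit of M(x) differs from the λ-th bit of M(y). -/
/-- The modified-label transformation: duplicate each bit and append 0, 1. -/
def modifiedLabel (x : List Bool) : List Bool :=
  x.flatMap (fun b => [b, b]) ++ [false, true]

lemma dup_length (x : List Bool) :
    (x.flatMap (fun b => [b, b])).length = 2 * x.length := by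
  induction x with
  | nil => simp
  | cons a t ih => simp [List.flatMap_cons, ih]; ring

lemma dup_getD_even (x : List Bool) (i : ℕ) (hi : i < x.length) (d : Bool) :
    (x.flatMap (fun b => [b, b])).getD (2 * i) d = x.getD i d := by
  induction x generalizing i with
  | nil => simp at hi
  | cons a t ih =>
    cases i with
    | zero => simp [List.flatMap_cons]
    | succ j =>
      have : 2 * (j + 1) = (2 * j) + 1 + 1 := by ring
      simp only [List.flatMap_cons, this, List.getD_cons_succ]
      exact ih j (by simpa using hi)

lemma dup_getD_odd (x : List Bool) (i : ℕ) (hi : i < x.length) (d : Bool) :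
    (x.flatMap (fun b => [b, b])).getD (2 * i + 1) d = x.getD i d := by
  induction x generalizing i with
  | nil => simp at hi
  | cons a t ih =>
    cases i with
    | zero => simp [List.flatMap_cons]
    | succ j =>
      have : 2 * (j + 1) + 1 = (2 * j + 1) + 1 + 1 := by ring
      simp only [List.flatMap_cons, this, List.getD_cons_succ]
      exact ih j (by simpa using hi)

lemma modifiedLabel_length (x : List Bool) :
    (modifiedLabel x).length = 2 * x.length + 2 := by
  rw [modifiedLabel, List.length_append, dup_length]; rfl

lemma modifiedLabel_getD_lt (x : List Bool) (n : ℕ) (hn : n < 2 * x.length) (d : Bool) :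
    (modifiedLabel x).getD n d = (x.flatMap (fun b => [b, b])).getD n d := by
  rw [modifiedLabel, List.getD_append _ _ _ _ (by rw [dup_length]; exact hn)]

lemma modifiedLabel_getD_tail0 (x : List Bool) (d : Bool) :
    (modifiedLabel x).getD (2 * x.length) d = false := by
  rw [modifiedLabel, List.getD_append_right _ _ _ _ (by rw [dup_length]), dup_length]
  simp

lemma modifiedLabel_getD_tail1 (x : List Bool) (d : Bool) :
    (modifiedLabel x).getD (2 * x.length + 1) d = true := by
  rw [modifiedLabel, List.getD_append_right _ _ _ _ (by rw [dup_length]; omega), dup_length]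
  simp

lemma aux_shorter (x y : List Bool) (hx : x ≠ [])
    (hlen : x.length < y.length)
    (_hpref : ∀ i < x.length, x.getD i false = y.getD i false) :
    ∃ l : ℕ, 1 ≤ l ∧ l < min (modifiedLabel x).length (modifiedLabel y).length ∧
      (modifiedLabel x).getD l false ≠ (modifiedLabel y).getD l false := by
  have hx1 : 1 ≤ x.length := List.length_pos_iff.mpr hx
  set n := x.length with hn
  set b := y.getD n false with hb
  have hylt : n < y.length := hlen
  have hMy_even : (modifiedLabel y).getD (2 * n) false = b := by
    rw [modifiedLabel_getD_lt y _ (by omega), dup_getD_even y n hylt]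
  have hMy_odd : (modifiedLabel y).getD (2 * n + 1) false = b := by
    rw [modifiedLabel_getD_lt y _ (by omega), dup_getD_odd y n hylt]
  cases hbv : b with
  | false =>
    refine ⟨2 * n + 1, by omega, ?_, ?_⟩
    · rw [modifiedLabel_length, modifiedLabel_length]; omega
    · rw [modifiedLabel_getD_tail1, hMy_odd, hbv]; simp
  | true =>
    refine ⟨2 * n, by omega, ?_, ?_⟩
    · rw [modifiedLabel_length, modifiedLabel_length]; omega
    · rw [modifiedLabel_getD_tail0, hMy_even, hbv]; simp

/-- For distinct nonempty bit strings `x` and `y`, the modified labels `M(x)` and `M(y)`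
differ at some position `l` with `1 ≤ l < min |M(x)| |M(y)|` (0-indexed). -/
theorem modifiedLabel_differ_at_inner_index (x y : List Bool)
    (hx : x ≠ []) (hy : y ≠ []) (hxy : x ≠ y) :
    ∃ l : ℕ, 1 ≤ l ∧ l < min (modifiedLabel x).length (modifiedLabel y).length ∧
      (modifiedLabel x).getD l false ≠ (modifiedLabel y).getD l false := by
  by_cases h : ∃ i, i < min x.length y.length ∧ x.getD i false ≠ y.getD i false
  · obtain ⟨i, hi, hne⟩ := h
    refine ⟨2 * i + 1, by omega, ?_, ?_⟩
    · rw [modifiedLabel_length, modifiedLabel_length]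
      simp only [lt_min_iff] at hi ⊢
      omega
    · simp only [lt_min_iff] at hi
      rw [modifiedLabel_getD_lt x _ (by omega), modifiedLabel_getD_lt y _ (by omega),
        dup_getD_odd x i hi.1, dup_getD_odd y i hi.2]
      exact hne
  · push_neg at h
    rcases lt_trichotomy x.length y.length with hl | hl | hl
    · exact aux_shorter x y hx hl (fun i hi => h i (by omega))
    · exfalso
      apply hxy
      apply List.ext_getElem hl
      intro i h1 h2
      have := h i (by omega)
      rwa [List.getD_eq_getElem _ _ h1, List.getD_eq_getElem _ _ h2] at this
    · obtain ⟨l, h1, h2, h3⟩ :=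
        aux_shorter y x hy hl (fun i hi => (h i (by omega)).symm)
      exact ⟨l, h1, by rwa [min_comm], h3.symm⟩
end

section
/- Suppose P : ℕ → ℕ is nondecreasing and P(k) ≥ 1 for all k ≥ 1. Then for every positive integer k, (k−1)·K*(k) + k·(2·A*(4k) + 2·B*(2k)) < (2k−1)·K*(k). (This is the counting inequality asserting that the number of nodes in the k-th piece of the trajectory constructed by Algorithm RV-asynch-poly, which is at most (k−1)·K*(k) + k·(2·A*(4k)+2·B*(2k)), is strictly less than (2k−1)·K*(k), the number of copies of the integral trajectory contained in the k-th fence Ω(k).) -/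
/-- `X*(k) = 2·P(k) + 1`: bound on the number of nodes of `X(k,v)`. -/
def Xstar (P : ℕ → ℕ) (k : ℕ) : ℕ := 2 * P k + 1

/-- `Q*(k) = Σ_{i=1}^k X*(i)`: bound on the number of nodes of `Q(k,v)`. -/
def Qstar (P : ℕ → ℕ) (k : ℕ) : ℕ := ∑ i ∈ Finset.Icc 1 k, Xstar P i

/-- `Y*(k) = 2·P(k)·Q*(k)`: bound on the number of nodes of `Y(k,v)`. -/
def Ystar (P : ℕ → ℕ) (k : ℕ) : ℕ := 2 * P k * Qstar P k

/-- `Z*(k) = Σ_{i=1}^k Y*(i)`: bound on the number of nodes of `Z(k,v)`. -/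
def Zstar (P : ℕ → ℕ) (k : ℕ) : ℕ := ∑ i ∈ Finset.Icc 1 k, Ystar P i

/-- `A*(k) = 2·P(k)·Z*(k)`: bound on the number of nodes of `A(k,v)`. -/
def Astar (P : ℕ → ℕ) (k : ℕ) : ℕ := 2 * P k * Zstar P k

/-- `B*(k) = 2·A*(8k)·Y*(k)`: bound on the number of nodes of `B(k,v)`. -/
def Bstar (P : ℕ → ℕ) (k : ℕ) : ℕ := 2 * Astar P (8 * k) * Ystar P k

/-- `K*(k) = 2·B*(8k)·X*(k)`: bound on the number of nodes of `K(k,v)`. -/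
def Kstar (P : ℕ → ℕ) (k : ℕ) : ℕ := 2 * Bstar P (8 * k) * Xstar P k

/-- `Ω*(k) = (2k−1)·K*(k)·X*(k)`: bound on the number of nodes of `Ω(k,v)`. -/
def Omegastar (P : ℕ → ℕ) (k : ℕ) : ℕ := (2 * k - 1) * Kstar P k * Xstar P k

/-- For nondecreasing `P` with `P(k) ≥ 1` for `k ≥ 1`, the number of nodes of the
`k`-th piece, at most `(k−1)·K*(k) + k·(2·A*(4k)+2·B*(2k))`, is strictly less than
`(2k−1)·K*(k)`, the number of copies of the integral trajectory in the `k`-th fence. -/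
theorem piece_lt_fence (P : ℕ → ℕ)
    (hP : ∀ k k' : ℕ, k ≤ k' → P k ≤ P k')
    (hP1 : ∀ k : ℕ, 1 ≤ k → 1 ≤ P k) :
    ∀ k : ℕ, 1 ≤ k →
      (k - 1) * Kstar P k + k * (2 * Astar P (4 * k) + 2 * Bstar P (2 * k))
        < (2 * k - 1) * Kstar P k := by
  intro k hk
  -- monotonicity lemmas
  have hX : ∀ a b, a ≤ b → Xstar P a ≤ Xstar P b := by
    intro a b h
    unfold Xstar
    have := hP a b h
    omega
  have hQ : ∀ a b, a ≤ b → Qstar P a ≤ Qstar P b := by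
    intro a b h
    unfold Qstar
    exact Finset.sum_le_sum_of_subset (Finset.Icc_subset_Icc_right h)
  have hY : ∀ a b, a ≤ b → Ystar P a ≤ Ystar P b := by
    intro a b h
    unfold Ystar
    exact Nat.mul_le_mul (Nat.mul_le_mul_left 2 (hP a b h)) (hQ a b h)
  have hZ : ∀ a b, a ≤ b → Zstar P a ≤ Zstar P b := by
    intro a b h
    unfold Zstar
    exact Finset.sum_le_sum_of_subset (Finset.Icc_subset_Icc_right h)
  have hA : ∀ a b, a ≤ b → Astar P a ≤ Astar P b := by
    intro a b h
    unfold Astar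
    exact Nat.mul_le_mul (Nat.mul_le_mul_left 2 (hP a b h)) (hZ a b h)
  -- positivity lemmas
  have hXpos : ∀ a, 1 ≤ a → 3 ≤ Xstar P a := by
    intro a ha
    have := hP1 a ha
    unfold Xstar
    omega
  have hQpos : ∀ a, 1 ≤ a → 1 ≤ Qstar P a := by
    intro a ha
    unfold Qstar
    calc 1 ≤ Xstar P 1 := by have := hXpos 1 le_rfl; omega
    _ ≤ _ := Finset.single_le_sum (f := fun i => Xstar P i)
        (fun i _ => Nat.zero_le _) (by simp [Finset.mem_Icc]; omega)
  have hYpos : ∀ a, 1 ≤ a → 2 ≤ Ystar P a := by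
    intro a ha
    unfold Ystar
    calc 2 = 2 * 1 * 1 := by norm_num
    _ ≤ _ := Nat.mul_le_mul (Nat.mul_le_mul_left 2 (hP1 a ha)) (hQpos a ha)
  have hZpos : ∀ a, 1 ≤ a → 1 ≤ Zstar P a := by
    intro a ha
    unfold Zstar
    calc 1 ≤ Ystar P 1 := by have := hYpos 1 le_rfl; omega
    _ ≤ _ := Finset.single_le_sum (f := fun i => Ystar P i)
        (fun i _ => Nat.zero_le _) (by simp [Finset.mem_Icc]; omega)
  have hApos : ∀ a, 1 ≤ a → 1 ≤ Astar P a := by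
    intro a ha
    unfold Astar
    calc 1 = 2 * 1 * 1 - 1 := by norm_num
    _ ≤ 2 * P a * Zstar P a - 1 := by
        have := Nat.mul_le_mul (Nat.mul_le_mul_left 2 (hP1 a ha)) (hZpos a ha)
        omega
    _ ≤ _ := Nat.sub_le _ _
  -- key inequality: 2·A(4k) + 2·B(2k) < K(k)
  have key : 2 * Astar P (4 * k) + 2 * Bstar P (2 * k) < Kstar P k := by
    have hK : Kstar P k = 4 * Astar P (64 * k) * Ystar P (8 * k) * Xstar P k := by
      unfold Kstar Bstar
      ring_nf
    have hB : Bstar P (2 * k) = 2 * Astar P (16 * k) * Ystar P (2 * k) := by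
      unfold Bstar
      congr 2
      ring
    rw [hK, hB]
    have h1 : Astar P (4 * k) ≤ Astar P (64 * k) := hA _ _ (by omega)
    have h2 : Astar P (16 * k) ≤ Astar P (64 * k) := hA _ _ (by omega)
    have h3 : Ystar P (2 * k) ≤ Ystar P (8 * k) := hY _ _ (by omega)
    have h4 : 3 ≤ Xstar P k := hXpos k hk
    have h5 : 2 ≤ Ystar P (8 * k) := hYpos _ (by omega)
    have h6 : 1 ≤ Astar P (64 * k) := hApos _ (by omega)
    set A := Astar P (64 * k)
    set Yv := Ystar P (8 * k)
    set Xv := Xstar P k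
    calc 2 * Astar P (4 * k) + 2 * (2 * Astar P (16 * k) * Ystar P (2 * k))
        ≤ 2 * A + 4 * A * Yv := by
          have := Nat.mul_le_mul h2 h3
          nlinarith
    _ < 4 * A * Yv * 3 := by nlinarith
    _ ≤ 4 * A * Yv * Xv := by
          exact Nat.mul_le_mul_left _ h4
  -- conclude
  have h2k : (2 * k - 1) = (k - 1) + k := by omega
  rw [h2k, add_mul]
  have : k * (2 * Astar P (4 * k) + 2 * Bstar P (2 * k)) < k * Kstar P k :=
    mul_lt_mul_of_pos_left key (by omega : 0 < k)
  omega
end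

section
/- Suppose P : ℕ → ℕ is polynomially bounded, i.e., there exists a polynomial p with natural-number coefficients such that P(k) ≤ p(k) for all k. Define N(n,m) = 2·(n + 2m + 2) + 1, T*(n,m,k) = N(n,m)·(2·A*(4k) + 2·B*(2k) + K*(k)), and Π(n,m) = Σ_{k=1}^{N(n,m)} (T*(n,m,k) + Ω*(k)). Then Π is polynomially bounded in n and m: there exists a polynomial q with natural-number coefficients such that Π(n,m) ≤ q(n + m) for all natural numbers n, m. -/
/-- `N(n,m) = 2·(n + 2m + 2) + 1`, where `l = 2m+2` is the length of the shorter
modified label. -/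
def Nbound (n m : ℕ) : ℕ := 2 * (n + 2 * m + 2) + 1

/-- `T*(n,m,k) = N(n,m)·(2·A*(4k) + 2·B*(2k) + K*(k))`: bound on the number of nodes
in a piece in iteration `k`. -/
def Tstar (P : ℕ → ℕ) (n m k : ℕ) : ℕ :=
  Nbound n m * (2 * Astar P (4 * k) + 2 * Bstar P (2 * k) + Kstar P k)

/-- `Π(n,m) = Σ_{k=1}^{N(n,m)} (T*(n,m,k) + Ω*(k))`: bound on the number of edge
traversals of an agent before rendezvous is guaranteed. -/
def Pibound (P : ℕ → ℕ) (n m : ℕ) : ℕ :=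
  ∑ k ∈ Finset.Icc 1 (Nbound n m), (Tstar P n m k + Omegastar P k)

private lemma evalMono (p : Polynomial ℕ) {a b : ℕ} (h : a ≤ b) :
    p.eval a ≤ p.eval b := by
  rw [Polynomial.eval_eq_sum_range, Polynomial.eval_eq_sum_range]
  exact Finset.sum_le_sum fun i _ => Nat.mul_le_mul_left _ (Nat.pow_le_pow_left h i)

private def PB (f : ℕ → ℕ) : Prop := ∃ p : Polynomial ℕ, ∀ k, f k ≤ p.eval k

private lemma pb_const (c : ℕ) : PB fun _ => c := ⟨Polynomial.C c, by simp⟩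

private lemma pb_id : PB fun k => k := ⟨Polynomial.X, by simp⟩

private lemma pb_mono {f g : ℕ → ℕ} (h : ∀ k, f k ≤ g k) (hg : PB g) : PB f := by
  obtain ⟨p, hp⟩ := hg; exact ⟨p, fun k => (h k).trans (hp k)⟩

private lemma pb_add {f g : ℕ → ℕ} (hf : PB f) (hg : PB g) : PB fun k => f k + g k := by
  obtain ⟨p, hp⟩ := hf; obtain ⟨q, hq⟩ := hg
  exact ⟨p + q, fun k => by simpa using Nat.add_le_add (hp k) (hq k)⟩

private lemma pb_mul {f g : ℕ → ℕ} (hf : PB f) (hg : PB g) : PB fun k => f k * g k := by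
  obtain ⟨p, hp⟩ := hf; obtain ⟨q, hq⟩ := hg
  exact ⟨p * q, fun k => by simpa using Nat.mul_le_mul (hp k) (hq k)⟩

private lemma pb_comp_mul {f : ℕ → ℕ} (c : ℕ) (hf : PB f) : PB fun k => f (c * k) := by
  obtain ⟨p, hp⟩ := hf
  exact ⟨p.comp (Polynomial.C c * Polynomial.X), fun k => by
    simpa [Polynomial.eval_comp] using hp (c * k)⟩

private lemma pb_sum {f : ℕ → ℕ} (hf : PB f) : PB fun k => ∑ i ∈ Finset.Icc 1 k, f i := by
  obtain ⟨p, hp⟩ := hf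
  refine ⟨Polynomial.X * p, fun k => ?_⟩
  rw [Polynomial.eval_mul, Polynomial.eval_X]
  calc ∑ i ∈ Finset.Icc 1 k, f i ≤ ∑ _i ∈ Finset.Icc 1 k, p.eval k :=
        Finset.sum_le_sum fun i hi => (hp i).trans (evalMono p (Finset.mem_Icc.mp hi).2)
    _ = k * p.eval k := by rw [Finset.sum_const, Nat.card_Icc]; simp


/-- If `P` is polynomially bounded, then `Π` is polynomially bounded in `n + m`. -/
theorem Pibound_polynomially_bounded (P : ℕ → ℕ)
    (hP : ∃ p : Polynomial ℕ, ∀ k : ℕ, P k ≤ p.eval k) :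
    ∃ q : Polynomial ℕ, ∀ n m : ℕ, Pibound P n m ≤ q.eval (n + m) := by
  have hPpb : PB P := hP
  have hX : PB (Xstar P) := pb_add (pb_mul (pb_const 2) hPpb) (pb_const 1)
  have hQ : PB (Qstar P) := pb_sum hX
  have hY : PB (Ystar P) := pb_mul (pb_mul (pb_const 2) hPpb) hQ
  have hZ : PB (Zstar P) := pb_sum hY
  have hA : PB (Astar P) := pb_mul (pb_mul (pb_const 2) hPpb) hZ
  have hB : PB (Bstar P) := pb_mul (pb_mul (pb_const 2) (pb_comp_mul 8 hA)) hY
  have hK : PB (Kstar P) := pb_mul (pb_mul (pb_const 2) (pb_comp_mul 8 hB)) hX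
  have hW : PB (Omegastar P) := by
    refine pb_mono (g := fun k => 2 * k * Kstar P k * Xstar P k) (fun k => ?_) ?_
    · exact Nat.mul_le_mul (Nat.mul_le_mul_right _ (Nat.sub_le _ _)) le_rfl
    · exact pb_mul (pb_mul (pb_mul (pb_const 2) pb_id) hK) hX
  have hpiece : PB (fun k => 2 * Astar P (4 * k) + 2 * Bstar P (2 * k) + Kstar P k) :=
    pb_add (pb_add (pb_mul (pb_const 2) (pb_comp_mul 4 hA))
      (pb_mul (pb_const 2) (pb_comp_mul 2 hB))) hK
  obtain ⟨r, hr⟩ := hpiece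
  obtain ⟨w, hw⟩ := hW
  set s : Polynomial ℕ := Polynomial.C 4 * Polynomial.X + Polynomial.C 5 with hs
  refine ⟨s * (s * r.comp s + w.comp s), fun n m => ?_⟩
  set N := Nbound n m with hN
  have hNS : N ≤ s.eval (n + m) := by
    simp only [hs, Polynomial.eval_add, Polynomial.eval_mul, Polynomial.eval_C,
      Polynomial.eval_X, hN, Nbound]
    omega
  have step1 : Pibound P n m ≤ N * (N * r.eval N + w.eval N) := by
    have : Pibound P n m ≤ ∑ _k ∈ Finset.Icc 1 N, (N * r.eval N + w.eval N) := by
      refine Finset.sum_le_sum fun k hk => ?_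
      have hk' := (Finset.mem_Icc.mp hk).2
      exact Nat.add_le_add
        (Nat.mul_le_mul_left _ ((hr k).trans (evalMono r hk')))
        ((hw k).trans (evalMono w hk'))
    calc Pibound P n m ≤ _ := this
      _ = N * (N * r.eval N + w.eval N) := by rw [Finset.sum_const, Nat.card_Icc]; simp
  refine step1.trans ?_
  have h2 : N * (N * r.eval N + w.eval N) ≤
      s.eval (n + m) * (s.eval (n + m) * r.eval (s.eval (n + m)) + w.eval (s.eval (n + m))) :=
    Nat.mul_le_mul hNS (Nat.add_le_add
      (Nat.mul_le_mul hNS (evalMono r hNS)) (evalMono w hNS))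
  simpa [Polynomial.eval_comp] using h2
end
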